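/- For every positive integer solution (u0,u1,u2) of (u0+u1+u2)^2 = 9*u0*u1*u2, each entry ui is congruent to 1 modulo 3. In particular, 3 divides none of the entries. -/

import Mathlib

private lemma aux_nine : ∀ n : ℕ, ∀ x y z : ℤ, 0 < x → 0 < y → 0 < z →
    (x + y + z).toNat = n → (x + y + z)^2 = 9 * x * y * z →
    (x % 3 = 1 ∧ y % 3 = 1 ∧ z % 3 = 1) := by
  intro n
  induction n using Nat.strong_induction_on with
  | _ n ih =>
  intro x y z hx hy hz hn heq
  have core : ∀ a b c : ℤ, 0 < a → a ≤ b → b ≤ c → a + b + c = x + y + z →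
      (a + b + c)^2 = 9 * a * b * c → a % 3 = 1 ∧ b % 3 = 1 ∧ c % 3 = 1 := by
    intro a b c ha hab hbc hsum heq'
    have hb : 0 < b := lt_of_lt_of_le ha hab
    have hc : 0 < c := lt_of_lt_of_le hb hbc
    by_cases hcase : c ≤ a + b
    · -- fundamental case: finite check
      have hq1 : 9 * a * b * c ≤ 4 * (a + b)^2 := by nlinarith
      have hq2 : 9 * a * b * b ≤ 9 * a * b * c := by nlinarith
      have hq3 : 4 * (a + b)^2 ≤ 16 * (b * b) := by
        nlinarith [mul_nonneg (sub_nonneg.2 hab) (by linarith : (0:ℤ) ≤ 3 * b + a)]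
      have ha1 : a = 1 := by nlinarith [mul_pos hb hb]
      subst ha1
      have hb2 : b ≤ 2 := by nlinarith
      have hc3 : c ≤ 1 + b := hcase
      interval_cases b <;> interval_cases c <;> revert heq' <;> norm_num
    · push_neg at hcase
      set d := 9 * a * b - 2 * a - 2 * b - c with hd_def
      have hdc : c * d = (a + b)^2 := by rw [hd_def]; linear_combination -heq'
      have hd : 0 < d := by
        by_contra hdn
        push_neg at hdn
        have h1 : c * d ≤ 0 := mul_nonpos_of_nonneg_of_nonpos (le_of_lt hc) hdn
        have h2 : 0 < (a + b)^2 := pow_pos (by linarith) 2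
        linarith [hdc ▸ h1]
      have hdlt : d < c := by nlinarith
      have heq'' : (a + b + d)^2 = 9 * a * b * d := by rw [hd_def]; linear_combination heq'
      have hsum' : a + b + d < x + y + z := by omega
      have hlt : (a + b + d).toNat < n := by omega
      obtain ⟨Ha, Hb, Hd⟩ := ih (a + b + d).toNat hlt a b d ha hb hd rfl heq''
      refine ⟨Ha, Hb, ?_⟩
      obtain ⟨k, hk⟩ : ∃ k : ℤ, c + d = 3 * k - 2 * a - 2 * b :=
        ⟨3 * a * b, by rw [hd_def]; ring⟩
      omega
  rcases le_total x y with hxy | hxy <;> rcases le_total y z with hyz | hyz <;>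
    rcases le_total x z with hxz | hxz
  · exact core x y z (by linarith) (by linarith) (by linarith) (by ring) (by linear_combination heq)
  · exact core x y z (by linarith) (by linarith) (by linarith) (by ring) (by linear_combination heq)
  · obtain ⟨A, B, C⟩ := core x z y (by linarith) (by linarith) (by linarith) (by ring)
      (by linear_combination heq)
    exact ⟨A, C, B⟩
  · obtain ⟨A, B, C⟩ := core z x y (by linarith) (by linarith) (by linarith) (by ring)
      (by linear_combination heq)
    exact ⟨B, C, A⟩
  · obtain ⟨A, B, C⟩ := core y x z (by linarith) (by linarith) (by linarith) (by ring)
      (by linear_combination heq)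
    exact ⟨B, A, C⟩
  · obtain ⟨A, B, C⟩ := core y z x (by linarith) (by linarith) (by linarith) (by ring)
      (by linear_combination heq)
    exact ⟨C, A, B⟩
  · obtain ⟨A, B, C⟩ := core z y x (by linarith) (by linarith) (by linarith) (by ring)
      (by linear_combination heq)
    exact ⟨C, B, A⟩
  · obtain ⟨A, B, C⟩ := core z y x (by linarith) (by linarith) (by linarith) (by ring)
      (by linear_combination heq)
    exact ⟨C, B, A⟩

theorem solutions_nine_mod_three (u0 u1 u2 : ℤ)
    (h0 : 0 < u0) (h1 : 0 < u1) (h2 : 0 < u2)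
    (heq : (u0 + u1 + u2)^2 = 9 * u0 * u1 * u2) :
    (u0 % 3 = 1 ∧ u1 % 3 = 1 ∧ u2 % 3 = 1) ∧
    (¬ (3 ∣ u0) ∧ ¬ (3 ∣ u1) ∧ ¬ (3 ∣ u2)) := by
  obtain ⟨H0, H1, H2⟩ := aux_nine (u0 + u1 + u2).toNat u0 u1 u2 h0 h1 h2 rfl heq
  exact ⟨⟨H0, H1, H2⟩, by omega, by omega, by omega⟩
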